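/- Let W be a Hermitian n×n matrix and W_- its negative part. For any monotone argument: if -μ_j < 0 are the negative eigenvalues of W, then for γ > 3/2, ∫_0^∞ t^{γ-5/2} tr(((W + t·1)_-)²) dt = B(γ - 3/2, 3) · Σ_j μ_j^{γ+1/2} = B(γ - 3/2, 3) · tr(W_-^{γ+1/2}). -/

import Mathlib

open MeasureTheory Set

/-- The Euler Beta function `B(x,y) = Γ(x)Γ(y)/Γ(x+y)`. -/
noncomputable def betaF (x y : ℝ) : ℝ :=
  Real.Gamma x * Real.Gamma y / Real.Gamma (x + y)

lemma betaF_eval (a : ℝ) (ha : 0 < a) :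
    betaF a 3 = 2 / (a * (a + 1) * (a + 2)) := by
  have hΓ : Real.Gamma a ≠ 0 := (Real.Gamma_pos_of_pos ha).ne'
  have h3 : Real.Gamma 3 = 2 := by
    have := Real.Gamma_nat_eq_factorial 2
    norm_num at this
    convert this using 2
    norm_num
  have h1 : Real.Gamma (a + 1) = a * Real.Gamma a := Real.Gamma_add_one ha.ne'
  have h2 : Real.Gamma (a + 2) = (a + 1) * Real.Gamma (a + 1) := by
    have := Real.Gamma_add_one (s := a + 1) (by positivity)
    convert this using 2 <;> ring
  have h3' : Real.Gamma (a + 3) = (a + 2) * Real.Gamma (a + 2) := by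
    have := Real.Gamma_add_one (s := a + 2) (by positivity)
    convert this using 2 <;> ring
  rw [betaF, h3, h3', h2, h1]
  field_simp

/-- max(μ - t, 0) identity used to unify cases. -/
lemma max_neg_add (l t : ℝ) (ht : 0 ≤ t) :
    max (-(l + t)) 0 = max (max (-l) 0 - t) 0 := by
  rcases le_or_gt 0 l with h | h
  · rw [max_eq_right (show -(l + t) ≤ 0 by linarith),
      max_eq_right (show -l ≤ 0 by linarith), zero_sub,
      max_eq_right (show -t ≤ 0 by linarith)]
  · rw [max_eq_left (show (0:ℝ) ≤ -l by linarith)]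
    congr 1
    ring

/-- Key single-eigenvalue integral. -/
lemma key_integral (a μ : ℝ) (ha : 0 < a) (hμ : 0 ≤ μ) :
    ∫ t in Ioi (0 : ℝ), t ^ (a - 1) * (max (μ - t) 0) ^ 2
      = 2 / (a * (a + 1) * (a + 2)) * μ ^ (a + 2) := by
  rcases eq_or_lt_of_le hμ with h0 | hμpos
  · -- μ = 0
    rw [← h0, Real.zero_rpow (by positivity : a + 2 ≠ 0), mul_zero]
    rw [setIntegral_congr_fun measurableSet_Ioi (g := fun _ => (0:ℝ))]
    · simp
    · intro t ht
      simp only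
      rw [max_eq_right (by simp at ht ⊢; linarith : (0:ℝ) - t ≤ 0)]
      ring
  · -- μ > 0
    have key : ∀ t ∈ Ioi (0:ℝ),
        t ^ (a - 1) * (max (μ - t) 0) ^ 2
          = Set.indicator (Ioc 0 μ) (fun t => t ^ (a - 1) * (μ - t) ^ 2) t := by
      intro t ht
      rcases le_or_gt t μ with h | h
      · rw [Set.indicator_of_mem (show t ∈ Ioc 0 μ from ⟨ht, h⟩), max_eq_left (by linarith)]
      · rw [Set.indicator_of_notMem (fun hc => absurd hc.2 (not_le.mpr h)),
          max_eq_right (by linarith)]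
        ring
    rw [setIntegral_congr_fun measurableSet_Ioi key, setIntegral_indicator measurableSet_Ioc,
      show Ioi (0:ℝ) ∩ Ioc 0 μ = Ioc 0 μ from inter_eq_right.mpr Ioc_subset_Ioi_self,
      ← intervalIntegral.integral_of_le hμ]
    have hcong : ∀ t ∈ uIcc (0:ℝ) μ,
        t ^ (a - 1) * (μ - t) ^ 2
          = μ ^ 2 * t ^ (a - 1) - 2 * μ * t ^ a + t ^ (a + 1) := by
      intro t ht
      rw [uIcc_of_le hμ] at ht
      rcases eq_or_lt_of_le ht.1 with h0 | htpos
      · rw [← h0]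
        rw [Real.zero_rpow ha.ne', Real.zero_rpow (by positivity : a + 1 ≠ 0)]
        ring
      · have h1 : t ^ a = t ^ (a - 1) * t := by
          rw [← Real.rpow_add_one htpos.ne' (a - 1), sub_add_cancel]
        have h2 : t ^ (a + 1) = t ^ (a - 1) * t * t := by
          rw [Real.rpow_add_one htpos.ne' a, h1]
        rw [h1, h2]; ring
    rw [intervalIntegral.integral_congr hcong]
    have I1 : IntervalIntegrable (fun t : ℝ => μ ^ 2 * t ^ (a - 1)) volume 0 μ :=
      (intervalIntegral.intervalIntegrable_rpow' (by linarith)).const_mul _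
    have I2 : IntervalIntegrable (fun t : ℝ => 2 * μ * t ^ a) volume 0 μ :=
      (intervalIntegral.intervalIntegrable_rpow' (by linarith)).const_mul _
    have I3 : IntervalIntegrable (fun t : ℝ => t ^ (a + 1)) volume 0 μ :=
      intervalIntegral.intervalIntegrable_rpow' (by linarith)
    rw [intervalIntegral.integral_add (I1.sub I2) I3, intervalIntegral.integral_sub I1 I2,
      intervalIntegral.integral_const_mul, intervalIntegral.integral_const_mul,
      integral_rpow (Or.inl (by linarith)), integral_rpow (Or.inl (by linarith)),
      integral_rpow (Or.inl (by linarith))]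
    rw [sub_add_cancel]
    have z1 : (0:ℝ) ^ a = 0 := Real.zero_rpow ha.ne'
    have z2 : (0:ℝ) ^ (a + 1) = 0 := Real.zero_rpow (by positivity)
    have z3 : (0:ℝ) ^ (a + 1 + 1) = 0 := Real.zero_rpow (by positivity)
    rw [z1, z2, z3]
    have e1 : μ ^ (a + 1) = μ ^ a * μ := Real.rpow_add_one hμpos.ne' a
    have e2 : μ ^ (a + 1 + 1) = μ ^ a * μ * μ := by
      rw [Real.rpow_add_one hμpos.ne' (a + 1), e1]
    have e3 : μ ^ (a + 2) = μ ^ a * μ * μ := by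
      rw [show a + 2 = a + 1 + 1 by ring, e2]
    rw [e1, e2, e3]
    have h1 : a ≠ 0 := ha.ne'
    have h2 : a + 1 ≠ 0 := by positivity
    have h3 : a + 2 ≠ 0 := by positivity
    field_simp
    ring

lemma key_integrable (a μ : ℝ) (ha : 0 < a) (hμ : 0 ≤ μ) :
    IntegrableOn (fun t => t ^ (a - 1) * (max (μ - t) 0) ^ 2) (Ioi (0 : ℝ)) := by
  have hmeas : AEStronglyMeasurable (fun t : ℝ => t ^ (a - 1) * (max (μ - t) 0) ^ 2)
      (volume.restrict (Ioi (0:ℝ))) := by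
    apply Measurable.aestronglyMeasurable
    exact (measurable_id'.pow_const (a-1)).mul
      (((measurable_const.sub measurable_id).max measurable_const).pow_const 2)
  have hsub : Ioi (0:ℝ) ⊆ Ioc 0 μ ∪ Ioi μ := by
    intro t ht
    rcases le_or_gt t μ with h | h
    · exact Or.inl ⟨ht, h⟩
    · exact Or.inr h
  refine IntegrableOn.mono_set (IntegrableOn.union ?_ ?_) hsub
  · have hg : IntegrableOn (fun t : ℝ => μ ^ 2 * t ^ (a - 1)) (Ioc 0 μ) :=
      ((intervalIntegral.intervalIntegrable_rpow' (by linarith : (-1:ℝ) < a - 1)).const_mul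
        (μ ^ 2)).1
    refine hg.integrable.mono ?_ ?_
    · apply Measurable.aestronglyMeasurable
      exact (measurable_id'.pow_const (a-1)).mul
        (((measurable_const.sub measurable_id).max measurable_const).pow_const 2)
    filter_upwards [ae_restrict_mem measurableSet_Ioc] with t ht
    have h1 : (0:ℝ) ≤ t ^ (a-1) := Real.rpow_nonneg ht.1.le _
    have h2 : max (μ - t) 0 = μ - t := max_eq_left (by linarith [ht.2])
    rw [h2, Real.norm_eq_abs, Real.norm_eq_abs, abs_of_nonneg (by nlinarith [ht.1.le, ht.2]),
      abs_of_nonneg (by positivity)]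
    have h3 : (μ - t) ^ 2 ≤ μ ^ 2 := by nlinarith [ht.1.le, ht.2]
    nlinarith [mul_le_mul_of_nonneg_left h3 h1]
  · have : EqOn (fun t : ℝ => t ^ (a - 1) * (max (μ - t) 0) ^ 2) 0 (Ioi μ) := by
      intro t ht
      simp only [Pi.zero_apply]
      rw [max_eq_right (by simp at ht; linarith : μ - t ≤ 0)]
      ring
    rw [integrableOn_congr_fun this measurableSet_Ioi]
    exact integrableOn_zero

theorem stmt13 {n : ℕ} (W : Matrix (Fin n) (Fin n) ℂ) (hW : W.IsHermitian)
    (γ : ℝ) (hγ : 3 / 2 < γ) :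
    ∫ t in Set.Ioi (0 : ℝ),
        t ^ (γ - 5 / 2) * ∑ j, (max (-(hW.eigenvalues j + t)) 0) ^ 2
      = betaF (γ - 3 / 2) 3 * ∑ j, (max (-(hW.eigenvalues j)) 0) ^ (γ + 1 / 2) := by
  set a : ℝ := γ - 3 / 2 with hadef
  have ha : 0 < a := by simp [hadef]; linarith
  have hexp : γ - 5 / 2 = a - 1 := by rw [hadef]; ring
  have hexp2 : γ + 1 / 2 = a + 2 := by rw [hadef]; ring
  have hcongr : ∀ t ∈ Ioi (0:ℝ),
      t ^ (γ - 5 / 2) * ∑ j, (max (-(hW.eigenvalues j + t)) 0) ^ 2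
        = ∑ j, t ^ (a - 1) * (max (max (-(hW.eigenvalues j)) 0 - t) 0) ^ 2 := by
    intro t ht
    rw [hexp, Finset.mul_sum]
    refine Finset.sum_congr rfl fun j _ => ?_
    rw [max_neg_add _ _ (le_of_lt ht)]
  rw [setIntegral_congr_fun measurableSet_Ioi hcongr,
    integral_finset_sum _ (fun j _ => key_integrable a _ ha (le_max_right _ _))]
  rw [betaF_eval a ha, Finset.mul_sum]
  refine Finset.sum_congr rfl fun j _ => ?_
  rw [key_integral a _ ha (le_max_right _ _), hexp2]
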